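/- Let H be a real Hilbert space, let μ ∈ ℝ and ρ < 0 with μρ < 1/4, and let z, w ∈ H with z ≠ 0. Then the inequality ⟨z, w⟩ ≥ μ‖z‖² + ρ‖w‖² holds if and only if the complex number c := (‖w‖/‖z‖)·(cos ∠(z,w) + i·sin ∠(z,w)) lies outside the open disk of center 1/(2ρ) and radius √(1 − 4μρ)/(2|ρ|), i.e. |c − 1/(2ρ)| ≥ √(1 − 4μρ)/(2|ρ|). -/

import Mathlib

open Classical in
/-- The angle between two vectors in a real Hilbert space: `arccos(⟪z,w⟫/(‖z‖‖w‖))`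
if both are nonzero, and `0` otherwise. -/
noncomputable def vecAngle {H : Type*} [NormedAddCommGroup H] [InnerProductSpace ℝ H]
    (z w : H) : ℝ :=
  if z ≠ 0 ∧ w ≠ 0 then Real.arccos ((inner ℝ z w : ℝ) / (‖z‖ * ‖w‖)) else 0

set_option maxHeartbeats 1600000 in
theorem stmt_1 {H : Type*} [NormedAddCommGroup H] [InnerProductSpace ℝ H] [CompleteSpace H]
    (μ ρ : ℝ) (hρ : ρ < 0) (hμρ : μ * ρ < 1 / 4) (z w : H) (hz : z ≠ 0) :
    (inner ℝ z w : ℝ) ≥ μ * ‖z‖ ^ 2 + ρ * ‖w‖ ^ 2 ↔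
      ‖
          ((‖w‖ / ‖z‖ : ℝ) : ℂ) *
              ((Real.cos (vecAngle z w) : ℂ) + (Real.sin (vecAngle z w) : ℂ) * Complex.I) -
            ((1 / (2 * ρ) : ℝ) : ℂ)‖ ≥
        Real.sqrt (1 - 4 * μ * ρ) / (2 * |ρ|) := by
  have hn : (0:ℝ) < ‖z‖ := norm_pos_iff.mpr hz
  set s : ℝ := (inner ℝ z w : ℝ) / ‖z‖ ^ 2 with hs
  set θ := vecAngle z w with hθ
  set r : ℝ := ‖w‖ / ‖z‖ with hr
  have hr0 : 0 ≤ r := div_nonneg (norm_nonneg _) hn.le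
  have hkey : r * Real.cos θ = s := by
    by_cases hw : w = 0
    · simp [hr, hθ, vecAngle, hw, hs]
    · have hnw : (0:ℝ) < ‖w‖ := norm_pos_iff.mpr hw
      have hθeq : θ = Real.arccos ((inner ℝ z w : ℝ) / (‖z‖ * ‖w‖)) := by
        simp [hθ, vecAngle, hz, hw]
      have hcs : |(inner ℝ z w : ℝ)| ≤ ‖z‖ * ‖w‖ := abs_real_inner_le_norm z w
      have h1 : -1 ≤ (inner ℝ z w : ℝ) / (‖z‖ * ‖w‖) := by
        rw [neg_le, ← neg_div]
        apply div_le_one_of_le₀ _ (by positivity)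
        nlinarith [abs_le.mp hcs]
      have h2 : (inner ℝ z w : ℝ) / (‖z‖ * ‖w‖) ≤ 1 := by
        apply div_le_one_of_le₀ _ (by positivity)
        nlinarith [abs_le.mp hcs]
      rw [hθeq, Real.cos_arccos h1 h2]
      rw [hr, hs]
      field_simp
  set A := ‖
      ((‖w‖ / ‖z‖ : ℝ) : ℂ) *
          ((Real.cos θ : ℂ) + (Real.sin θ : ℂ) * Complex.I) -
        ((1 / (2 * ρ) : ℝ) : ℂ)‖ with hA
  have hA0 : 0 ≤ A := norm_nonneg _
  have hne : ρ ≠ 0 := hρ.ne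
  have hA2 : A ^ 2 = (r * Real.cos θ - 1 / (2 * ρ)) ^ 2 + (r * Real.sin θ) ^ 2 := by
    rw [hA, Complex.sq_norm, Complex.normSq_apply]
    simp [Complex.cos_ofReal_re, Complex.sin_ofReal_re, hr]
    ring
  have hsin : (r * Real.sin θ) ^ 2 = r ^ 2 - s ^ 2 := by
    have h := Real.sin_sq_add_cos_sq θ
    linear_combination r ^ 2 * h - (s + r * Real.cos θ) * hkey
  have hA2' : A ^ 2 = r ^ 2 - s / ρ + 1 / (4 * ρ ^ 2) := by
    rw [hA2, hsin, hkey]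
    field_simp
    ring
  have hrad : 0 < 1 - 4 * μ * ρ := by nlinarith
  set R : ℝ := Real.sqrt (1 - 4 * μ * ρ) / (2 * |ρ|) with hR
  have hR0 : 0 ≤ R := by positivity
  have hR2 : R ^ 2 = (1 - 4 * μ * ρ) / (4 * ρ ^ 2) := by
    rw [hR, div_pow, Real.sq_sqrt hrad.le, mul_pow, sq_abs]
    norm_num
  have hiff2 : A ≥ R ↔ A ^ 2 ≥ R ^ 2 := by
    constructor
    · intro h; nlinarith
    · intro h; nlinarith
  rw [hiff2, hA2', hR2]
  have hinner : (inner ℝ z w : ℝ) = s * ‖z‖ ^ 2 := by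
    rw [hs]; field_simp
  have hw2 : ‖w‖ ^ 2 = r ^ 2 * ‖z‖ ^ 2 := by
    rw [hr]; field_simp
  rw [hinner, hw2]
  have key : (r ^ 2 - s / ρ + 1 / (4 * ρ ^ 2)) - (1 - 4 * μ * ρ) / (4 * ρ ^ 2)
      = (s - μ - ρ * r ^ 2) * (-(1 / ρ)) := by
    field_simp [hne]
    ring
  have hnegρ : (0:ℝ) < -(1 / ρ) := by
    have := one_div_neg.mpr hρ; linarith
  clear_value A R θ s r
  clear hs hr hθ hA hR hA2 hsin hA2' hR2 hiff2 hinner hw2 hkey hA0 hR0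
  generalize ‖z‖ = n at hn ⊢
  clear hz z w
  constructor
  · intro h
    have h1 : 0 ≤ s - μ - ρ * r ^ 2 := by nlinarith [mul_pos hn hn]
    have h2 : 0 ≤ (s - μ - ρ * r ^ 2) * (-(1 / ρ)) := mul_nonneg h1 hnegρ.le
    linarith [key]
  · intro h
    have h2 : 0 ≤ (s - μ - ρ * r ^ 2) * (-(1 / ρ)) := by linarith [key]
    have h1 : 0 ≤ s - μ - ρ * r ^ 2 := by
      by_contra hc
      push_neg at hc
      nlinarith
    nlinarith [mul_pos hn hn]
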